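/- Let P be a poset and (G,f) a vertex-minimal P-filtered graph (no collapsible edges). Then the canonical surjection ⊕_{v∈V} P_{f(v)}·{v} → H₀(G,f), sending {v} to the class [v], is a finite projective cover, and consequently the 0th Betti table of H₀(G,f) equals the sum over v ∈ V of the delta function δ_{f(v)}. -/

import Mathlib

structure Grph where
  V : Type
  E : Type
  [fintV : Fintype V]
  [fintE : Fintype E]
  [decV : DecidableEq V]
  [decE : DecidableEq E]
  bnd : E → V × V

attribute [instance] Grph.fintV Grph.fintE Grph.decV Grph.decE

/-- boundary map k⟨E⟩ → k⟨V⟩, e ↦ e₁ - e₀ -/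
noncomputable def Grph.d (G : Grph) (k : Type) [Field k] :
    (G.E →₀ k) →ₗ[k] (G.V →₀ k) :=
  Finsupp.linearCombination k fun e =>
    Finsupp.single (G.bnd e).2 1 - Finsupp.single (G.bnd e).1 1

def Grph.adj (G : Grph) (v w : G.V) : Prop :=
  ∃ e, G.bnd e = (v, w) ∨ G.bnd e = (w, v)

structure FGrph (P : Type) [PartialOrder P] extends Grph where
  fV : V → P
  fE : E → P
  mono0 : ∀ e, fV (bnd e).1 ≤ fE e
  mono1 : ∀ e, fV (bnd e).2 ≤ fE e

variable {P : Type} [PartialOrder P]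

/-- boundary map of the sublevel graph at grade r -/
noncomputable def FGrph.dr (G : FGrph P) (k : Type) [Field k] (r : P) :
    ({e : G.E // G.fE e ≤ r} →₀ k) →ₗ[k] ({v : G.V // G.fV v ≤ r} →₀ k) :=
  Finsupp.linearCombination k fun e =>
    Finsupp.single ⟨(G.bnd e.1).2, le_trans (G.mono1 e.1) e.2⟩ 1 -
    Finsupp.single ⟨(G.bnd e.1).1, le_trans (G.mono0 e.1) e.2⟩ 1

noncomputable def FGrph.vmap (G : FGrph P) (k : Type) [Field k] {r s : P} (h : r ≤ s) :
    ({v : G.V // G.fV v ≤ r} →₀ k) →ₗ[k] ({v : G.V // G.fV v ≤ s} →₀ k) :=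
  Finsupp.lmapDomain k k fun v => ⟨v.1, le_trans v.2 h⟩

noncomputable def FGrph.emap (G : FGrph P) (k : Type) [Field k] {r s : P} (h : r ≤ s) :
    ({e : G.E // G.fE e ≤ r} →₀ k) →ₗ[k] ({e : G.E // G.fE e ≤ s} →₀ k) :=
  Finsupp.lmapDomain k k fun e => ⟨e.1, le_trans e.2 h⟩

lemma FGrph.dNat (G : FGrph P) (k : Type) [Field k] {r s : P} (h : r ≤ s) :
    (G.dr k s).comp (G.emap k h) = (G.vmap k h).comp (G.dr k r) := by
  apply Finsupp.lhom_ext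
  intro e a
  show (G.dr k s) ((G.emap k h) (Finsupp.single e a)) =
    (G.vmap k h) ((G.dr k r) (Finsupp.single e a))
  rw [FGrph.emap, Finsupp.lmapDomain_apply, Finsupp.mapDomain_single, FGrph.dr,
    Finsupp.linearCombination_single, FGrph.dr, Finsupp.linearCombination_single,
    map_smul, map_sub, FGrph.vmap, Finsupp.lmapDomain_apply, Finsupp.lmapDomain_apply,
    Finsupp.mapDomain_single, Finsupp.mapDomain_single]

/-- 0-dim homology of the sublevel graph at r -/
noncomputable abbrev FGrph.H0at (G : FGrph P) (k : Type) [Field k] (r : P) :=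
  ({v : G.V // G.fV v ≤ r} →₀ k) ⧸ LinearMap.range (G.dr k r)

noncomputable def FGrph.H0map (G : FGrph P) (k : Type) [Field k] {r s : P} (h : r ≤ s) :
    G.H0at k r →ₗ[k] G.H0at k s :=
  Submodule.mapQ _ _ (G.vmap k h) (by
    rintro x ⟨y, rfl⟩
    exact ⟨G.emap k h y, by
      have := LinearMap.congr_fun (G.dNat k h) y
      simpa using this⟩)

noncomputable abbrev FGrph.H1at (G : FGrph P) (k : Type) [Field k] (r : P) :=
  LinearMap.ker (G.dr k r)

noncomputable def FGrph.H1map (G : FGrph P) (k : Type) [Field k] {r s : P} (h : r ≤ s) :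
    G.H1at k r →ₗ[k] G.H1at k s :=
  (G.emap k h).restrict (p := LinearMap.ker (G.dr k r)) (q := LinearMap.ker (G.dr k s))
    (by
      intro x hx
      have := LinearMap.congr_fun (G.dNat k h) x
      simp only [LinearMap.mem_ker] at hx ⊢
      simp only [LinearMap.coe_comp, Function.comp_apply] at this
      rw [this, hx, map_zero])

def FGrph.adjAt (G : FGrph P) (r : P) (a b : G.V) : Prop :=
  ∃ e, G.fE e ≤ r ∧ (G.bnd e = (a, b) ∨ G.bnd e = (b, a))

def FGrph.connAt (G : FGrph P) (r : P) : G.V → G.V → Prop :=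
  Relation.ReflTransGen (G.adjAt r)

def FGrph.pi0At (G : FGrph P) (r : P) :=
  Quot (fun a b : {v : G.V // G.fV v ≤ r} => G.adjAt r a.1 b.1)

def FGrph.Collapsible (G : FGrph P) (e : G.E) : Prop :=
  (G.bnd e).1 ≠ (G.bnd e).2 ∧
    (G.fE e = G.fV (G.bnd e).1 ∨ G.fE e = G.fV (G.bnd e).2)

def FGrph.delete (G : FGrph P) (e : G.E) : FGrph P where
  V := G.V
  E := {d : G.E // d ≠ e}
  bnd d := G.bnd d.1
  fV := G.fV
  fE d := G.fE d.1
  mono0 d := G.mono0 d.1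
  mono1 d := G.mono1 d.1

def FGrph.Deletable (G : FGrph P) (e : G.E) : Prop :=
  (G.delete e).connAt (G.fE e) (G.bnd e).1 (G.bnd e).2

def FGrph.collapse (G : FGrph P) (e : G.E) (x y : G.V) (hxy : y ≠ x)
    (hf : G.fV y ≤ G.fV x) : FGrph P where
  V := {v : G.V // v ≠ x}
  E := {d : G.E // d ≠ e}
  bnd d :=
    (if h : (G.bnd d.1).1 = x then ⟨y, hxy⟩ else ⟨(G.bnd d.1).1, h⟩,
     if h : (G.bnd d.1).2 = x then ⟨y, hxy⟩ else ⟨(G.bnd d.1).2, h⟩)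
  fV v := G.fV v.1
  fE d := G.fE d.1
  mono0 d := by
    dsimp only
    split
    · exact le_trans hf (by rw [← ‹(G.bnd d.1).1 = x›]; exact G.mono0 d.1)
    · exact G.mono0 d.1
  mono1 d := by
    dsimp only
    split
    · exact le_trans hf (by rw [← ‹(G.bnd d.1).2 = x›]; exact G.mono1 d.1)
    · exact G.mono1 d.1

/-- A `P`-persistence module: a functor `P → Vec_k`, given explicitly. -/
structure PersMod (P : Type) [PartialOrder P] (k : Type) [Field k] : Type 1 where
  obj : P → Type
  [acg : ∀ r, AddCommGroup (obj r)]
  [mod : ∀ r, Module k (obj r)]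
  map : ∀ {r s : P}, r ≤ s → (obj r →ₗ[k] obj s)
  map_refl : ∀ (r : P) (x : obj r), map (le_refl r) x = x
  map_trans : ∀ {r s t : P} (h1 : r ≤ s) (h2 : s ≤ t) (x : obj r),
    map h2 (map h1 x) = map (le_trans h1 h2) x

attribute [instance] PersMod.acg PersMod.mod

variable {P : Type} [PartialOrder P]

/-- A morphism of persistence modules: a natural transformation. -/
structure PersHom (k : Type) [Field k] (M N : PersMod P k) where
  app : ∀ r : P, M.obj r →ₗ[k] N.obj r
  nat : ∀ {r s : P} (h : r ≤ s) (x : M.obj r),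
    app s (M.map h x) = N.map h (app r x)

/-- The finite direct sum of indicator projectives `⊕_{i ∈ I} P_{f i}`:
at grade `r` it is the free vector space on `{i // f i ≤ r}`, with structure maps
induced by the inclusions of index sets.  For `I = Unit` this is the indicator
projective `P_{f ()}` itself. -/
noncomputable def freePers (k : Type) [Field k] (I : Type) (f : I → P) : PersMod P k where
  obj r := {i : I // f i ≤ r} →₀ k
  map h := Finsupp.lmapDomain k k fun i => ⟨i.1, le_trans i.2 h⟩
  map_refl r x := by
    rw [Finsupp.lmapDomain_apply,
      show (fun i : {i : I // f i ≤ r} => (⟨i.1, le_trans i.2 (le_refl r)⟩ :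
        {i : I // f i ≤ r})) = id from rfl, Finsupp.mapDomain_id]
  map_trans h1 h2 x := by
    rw [Finsupp.lmapDomain_apply, Finsupp.lmapDomain_apply, Finsupp.lmapDomain_apply,
      ← Finsupp.mapDomain_comp]
    rfl

/-- A morphism of persistence modules is surjective if it is so at every grade. -/
def PersHom.Surj {k : Type} [Field k] {M N : PersMod P k} (g : PersHom k M N) : Prop :=
  ∀ r : P, Function.Surjective (g.app r)
/-- `g : ⊕_{i∈I} P_{f i} → M` is a finite projective cover: it is surjective and the
total number of indecomposable summands is minimal among all such surjections. -/
def IsProjCover {k : Type} [Field k] {I : Type} [Fintype I] (f : I → P) (M : PersMod P k)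
    (g : PersHom k (freePers k I f) M) : Prop :=
  g.Surj ∧ ∀ (J : Type) (_ : Fintype J) (f' : J → P)
    (g' : PersHom k (freePers k J f') M), g'.Surj →
      Fintype.card I ≤ Fintype.card J
/-- H₀ of a filtered graph as a persistence module -/
noncomputable def FGrph.H0Mod (G : FGrph P) (k : Type) [Field k] : PersMod P k where
  obj r := G.H0at k r
  map h := G.H0map k h
  map_refl r x := by
    obtain ⟨y, rfl⟩ := Submodule.Quotient.mk_surjective _ x
    show G.H0map k (le_refl r) (Submodule.Quotient.mk y) = Submodule.Quotient.mk y
    rw [FGrph.H0map, Submodule.mapQ_apply]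
    congr 1
    rw [FGrph.vmap, Finsupp.lmapDomain_apply,
      show (fun v : {v : G.V // G.fV v ≤ r} => (⟨v.1, le_trans v.2 (le_refl r)⟩ :
        {v : G.V // G.fV v ≤ r})) = id from rfl, Finsupp.mapDomain_id]
  map_trans h1 h2 x := by
    obtain ⟨y, rfl⟩ := Submodule.Quotient.mk_surjective _ x
    show G.H0map k h2 (G.H0map k h1 (Submodule.Quotient.mk y)) =
      G.H0map k (le_trans h1 h2) (Submodule.Quotient.mk y)
    rw [FGrph.H0map, FGrph.H0map, FGrph.H0map, Submodule.mapQ_apply,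
      Submodule.mapQ_apply, Submodule.mapQ_apply]
    congr 1
    rw [FGrph.vmap, FGrph.vmap, FGrph.vmap, Finsupp.lmapDomain_apply,
      Finsupp.lmapDomain_apply, Finsupp.lmapDomain_apply, ← Finsupp.mapDomain_comp]
    rfl

/-- The canonical surjection `⊕_{v∈V} P_{f(v)} → H₀(G,f)`, sending `{v}` to `[v]`. -/
noncomputable def FGrph.covHom (G : FGrph P) (k : Type) [Field k] :
    PersHom k (freePers k G.V G.fV) (G.H0Mod k) where
  app r := (LinearMap.range (G.dr k r)).mkQ
  nat {r s} h x := by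
    show (LinearMap.range (G.dr k s)).mkQ ((freePers k G.V G.fV).map h x) =
      G.H0map k h ((LinearMap.range (G.dr k r)).mkQ x)
    rfl

section AuxCover

variable (k : Type) [Field k] (G : FGrph P)

/-- If no edge is collapsible, every edge in the sublevel graph at `p` either is a loop or
has both endpoints of grade `≠ p`. -/
lemma FGrph.endpoint_grades (hvm : ∀ e : G.E, ¬ G.Collapsible e) {p : P} {e : G.E}
    (he : G.fE e ≤ p) :
    (G.bnd e).1 = (G.bnd e).2 ∨ (G.fV (G.bnd e).1 ≠ p ∧ G.fV (G.bnd e).2 ≠ p) := by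
  by_cases h : (G.bnd e).1 = (G.bnd e).2
  · exact Or.inl h
  · right
    have h1 : ¬ (G.fE e = G.fV (G.bnd e).1 ∨ G.fE e = G.fV (G.bnd e).2) :=
      fun hc => hvm e ⟨h, hc⟩
    push_neg at h1
    refine ⟨fun hp => h1.1 (le_antisymm (hp ▸ he) (G.mono0 e)),
      fun hp => h1.2 (le_antisymm (hp ▸ he) (G.mono1 e))⟩

open Classical in
noncomputable def FGrph.psiFun (p : P) (v : {v : G.V // G.fV v ≤ p}) :
    {v : G.V // G.fV v = p} →₀ k :=
  if h : G.fV v.1 = p then Finsupp.single ⟨v.1, h⟩ 1 else 0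

noncomputable def FGrph.psi (p : P) :
    ({v : G.V // G.fV v ≤ p} →₀ k) →ₗ[k] ({v : G.V // G.fV v = p} →₀ k) :=
  Finsupp.linearCombination k (G.psiFun k p)

lemma FGrph.psi_single (p : P) (v : {v : G.V // G.fV v ≤ p}) (a : k) :
    G.psi k p (Finsupp.single v a) = a • G.psiFun k p v := by
  rw [FGrph.psi, Finsupp.linearCombination_single]

lemma FGrph.psi_dr (hvm : ∀ e : G.E, ¬ G.Collapsible e) (p : P) :
    (G.psi k p).comp (G.dr k p) = 0 := by
  apply Finsupp.lhom_ext
  intro e a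
  show G.psi k p ((G.dr k p) (Finsupp.single e a)) = 0
  rw [FGrph.dr, Finsupp.linearCombination_single, map_smul, map_sub,
    FGrph.psi_single, FGrph.psi_single, one_smul, one_smul]
  rcases G.endpoint_grades hvm e.2 with h | ⟨h0, h1⟩
  · have : (⟨(G.bnd e.1).2, le_trans (G.mono1 e.1) e.2⟩ : {v : G.V // G.fV v ≤ p}) =
        ⟨(G.bnd e.1).1, le_trans (G.mono0 e.1) e.2⟩ := Subtype.ext h.symm
    rw [this]
    simp
  · rw [FGrph.psiFun, FGrph.psiFun, dif_neg h1, dif_neg h0]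
    simp

noncomputable def FGrph.phi (hvm : ∀ e : G.E, ¬ G.Collapsible e) (p : P) :
    G.H0at k p →ₗ[k] ({v : G.V // G.fV v = p} →₀ k) :=
  Submodule.liftQ _ (G.psi k p) (LinearMap.range_le_ker_iff.2 (G.psi_dr k hvm p))

lemma FGrph.phi_mk (hvm : ∀ e : G.E, ¬ G.Collapsible e) (p : P)
    (x : {v : G.V // G.fV v ≤ p} →₀ k) :
    G.phi k hvm p (Submodule.Quotient.mk x) = G.psi k p x := rfl

lemma FGrph.phi_map (hvm : ∀ e : G.E, ¬ G.Collapsible e) {q p : P} (h : q ≤ p)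
    (hne : q ≠ p) (x : G.H0at k q) :
    G.phi k hvm p (G.H0map k h x) = 0 := by
  obtain ⟨y, rfl⟩ := Submodule.Quotient.mk_surjective _ x
  rw [FGrph.H0map, Submodule.mapQ_apply, FGrph.phi_mk]
  induction y using Finsupp.induction_linear with
  | zero => simp
  | add f g hf hg => rw [map_add, map_add, hf, hg, add_zero]
  | single v a =>
    rw [FGrph.vmap, Finsupp.lmapDomain_apply, Finsupp.mapDomain_single, FGrph.psi_single]
    have : G.psiFun k p ⟨v.1, le_trans v.2 h⟩ = 0 := by
      rw [FGrph.psiFun, dif_neg]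
      intro hc
      exact hne (le_antisymm h (hc ▸ v.2))
    rw [this, smul_zero]

lemma FGrph.phi_surj (hvm : ∀ e : G.E, ¬ G.Collapsible e) (p : P) :
    Function.Surjective (G.phi k hvm p) := by
  intro y
  refine ⟨Finsupp.linearCombination k
    (fun v : {v : G.V // G.fV v = p} =>
      (Submodule.Quotient.mk (Finsupp.single ⟨v.1, le_of_eq v.2⟩ 1) : G.H0at k p)) y, ?_⟩
  induction y using Finsupp.induction_linear with
  | zero => simp
  | add f g hf hg => rw [map_add, map_add, hf, hg]
  | single v a =>
    rw [Finsupp.linearCombination_single, map_smul, FGrph.phi_mk, FGrph.psi_single,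
      one_smul, FGrph.psiFun, dif_pos v.2]
    rw [Finsupp.smul_single, smul_eq_mul, mul_one]

/-- Key counting bound: any graded surjection onto `H₀` needs, at each grade `p`, at least
as many generators of grade `p` as there are vertices of grade `p`. -/
lemma FGrph.fiber_le (hvm : ∀ e : G.E, ¬ G.Collapsible e) {J : Type} [Fintype J]
    (f' : J → P) (g' : PersHom k (freePers k J f') (G.H0Mod k)) (hs : g'.Surj) (p : P) :
    Nat.card {v : G.V // G.fV v = p} ≤ Nat.card {j : J // f' j = p} := by
  classical
  set θ : ({j : J // f' j = p} →₀ k) →ₗ[k] ({v : G.V // G.fV v = p} →₀ k) :=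
    Finsupp.linearCombination k
      (fun j => G.phi k hvm p (g'.app p (Finsupp.single ⟨j.1, le_of_eq j.2⟩ 1))) with hθdef
  have hθ : Function.Surjective θ := by
    intro y
    obtain ⟨x, hx⟩ := G.phi_surj k hvm p y
    obtain ⟨w, rfl⟩ := hs p x
    subst hx
    induction w using Finsupp.induction_linear with
    | zero => exact ⟨0, by rw [map_zero]; exact ((G.phi k hvm p).map_zero.symm.trans (congrArg _ ((g'.app p).map_zero.symm)))⟩
    | add f g hf hg =>
      obtain ⟨zf, hzf⟩ := hf
      obtain ⟨zg, hzg⟩ := hg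
      exact ⟨zf + zg, by
        rw [map_add, hzf, hzg]
        exact ((G.phi k hvm p).map_add _ _).symm.trans (congrArg _ ((g'.app p).map_add f g).symm)⟩
    | single j a =>
      by_cases hj : f' j.1 = p
      · refine ⟨Finsupp.single ⟨j.1, hj⟩ a, ?_⟩
        have hja : (⟨j.1, le_of_eq hj⟩ : {j : J // f' j ≤ p}) = j := Subtype.ext rfl
        have hsa : (Finsupp.single j a : {j : J // f' j ≤ p} →₀ k) =
            a • Finsupp.single j (1 : k) := by
          rw [Finsupp.smul_single, smul_eq_mul, mul_one]
        rw [hθdef, Finsupp.linearCombination_single, hja, hsa]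
        exact ((congrArg _ ((g'.app p).map_smul a _)).trans ((G.phi k hvm p).map_smul _ _)).symm
      · refine ⟨0, ?_⟩
        have h1 : (Finsupp.single j a : {j : J // f' j ≤ p} →₀ k) =
            (freePers k J f').map j.2 (Finsupp.single ⟨j.1, le_refl _⟩ a) := by
          show _ = Finsupp.mapDomain _ _
          rw [Finsupp.mapDomain_single]
        rw [map_zero, h1]
        exact ((congrArg (G.phi k hvm p) (g'.nat j.2 _)).trans (G.phi_map k hvm j.2 hj _)).symm
  have h1 : Module.finrank k ({v : G.V // G.fV v = p} →₀ k) ≤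
      Module.finrank k ({j : J // f' j = p} →₀ k) := by
    rw [← LinearMap.range_eq_top] at hθ
    calc Module.finrank k ({v : G.V // G.fV v = p} →₀ k)
        = Module.finrank k (⊤ : Submodule k ({v : G.V // G.fV v = p} →₀ k)) :=
          (finrank_top k _).symm
      _ = Module.finrank k (LinearMap.range θ) := by rw [hθ]
      _ ≤ _ := LinearMap.finrank_range_le θ
  rwa [Module.finrank_finsupp_self, Module.finrank_finsupp_self,
    ← Nat.card_eq_fintype_card, ← Nat.card_eq_fintype_card] at h1

lemma FGrph.card_le (hvm : ∀ e : G.E, ¬ G.Collapsible e) {J : Type} [Fintype J]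
    (f' : J → P) (g' : PersHom k (freePers k J f') (G.H0Mod k)) (hs : g'.Surj) :
    Fintype.card G.V ≤ Fintype.card J := by
  classical
  set F : Finset P := Finset.univ.image G.fV ∪ Finset.univ.image f' with hF
  have hV : Fintype.card G.V =
      ∑ p ∈ F, (Finset.univ.filter (fun v => G.fV v = p)).card := by
    rw [← Finset.card_univ]
    exact Finset.card_eq_sum_card_fiberwise (fun v _ =>
      Finset.mem_union_left _ (Finset.mem_image_of_mem _ (Finset.mem_univ v)))
  have hJ : Fintype.card J =
      ∑ p ∈ F, (Finset.univ.filter (fun j => f' j = p)).card := by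
    rw [← Finset.card_univ]
    exact Finset.card_eq_sum_card_fiberwise (fun j _ =>
      Finset.mem_union_right _ (Finset.mem_image_of_mem _ (Finset.mem_univ j)))
  rw [hV, hJ]
  refine Finset.sum_le_sum fun p _ => ?_
  have := G.fiber_le k hvm f' g' hs p
  rwa [Nat.card_eq_fintype_card, Nat.card_eq_fintype_card,
    Fintype.card_subtype, Fintype.card_subtype] at this

end AuxCover

/-- if `(G,f)` is vertex-minimal (no collapsible edges), then the canonical
surjection `⊕_{v∈V} P_{f(v)} → H₀(G,f)` is a finite projective cover; consequently the
0th Betti table of `H₀(G,f)` is `Σ_{v∈V} δ_{f(v)}`: for any finite projective cover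
`⊕_{j∈J} P_{f'(j)} → H₀(G,f)` and any grade `p`, the number of `j` with `f'(j) = p`
equals the number of vertices with `f(v) = p`. -/
theorem vertexMinimal_projective_cover (k : Type) [Field k] (G : FGrph P)
    (hvm : ∀ e : G.E, ¬ G.Collapsible e) :
    IsProjCover G.fV (G.H0Mod k) (G.covHom k) ∧
    ∀ (J : Type) (_ : Fintype J) (fJ : J → P)
      (g' : PersHom k (freePers k J fJ) (G.H0Mod k)),
        IsProjCover fJ (G.H0Mod k) g' →
          ∀ p : P, Nat.card {j : J // fJ j = p} = Nat.card {v : G.V // G.fV v = p} := by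
  classical
  have hcov : IsProjCover G.fV (G.H0Mod k) (G.covHom k) := by
    refine ⟨fun r => Submodule.mkQ_surjective _, ?_⟩
    intro J _ f' g' hs
    exact G.card_le k hvm f' g' hs
  refine ⟨hcov, ?_⟩
  intro J _ fJ g' hpc p
  have hJV : Fintype.card J = Fintype.card G.V :=
    le_antisymm (hpc.2 G.V G.fintV G.fV (G.covHom k) hcov.1) (G.card_le k hvm fJ g' hpc.1)
  set F : Finset P := Finset.univ.image G.fV ∪ Finset.univ.image fJ ∪ {p} with hF
  have hV : Fintype.card G.V =
      ∑ q ∈ F, (Finset.univ.filter (fun v => G.fV v = q)).card := by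
    rw [← Finset.card_univ]
    exact Finset.card_eq_sum_card_fiberwise (fun v _ => Finset.mem_union_left _
      (Finset.mem_union_left _ (Finset.mem_image_of_mem _ (Finset.mem_univ v))))
  have hJ : Fintype.card J =
      ∑ q ∈ F, (Finset.univ.filter (fun j => fJ j = q)).card := by
    rw [← Finset.card_univ]
    exact Finset.card_eq_sum_card_fiberwise (fun j _ => Finset.mem_union_left _
      (Finset.mem_union_right _ (Finset.mem_image_of_mem _ (Finset.mem_univ j))))
  have hle : ∀ q ∈ F, (Finset.univ.filter (fun v => G.fV v = q)).card ≤
      (Finset.univ.filter (fun j => fJ j = q)).card := by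
    intro q _
    have := G.fiber_le k hvm fJ g' hpc.1 q
    rwa [Nat.card_eq_fintype_card, Nat.card_eq_fintype_card,
      Fintype.card_subtype, Fintype.card_subtype] at this
  have hsum : ∑ q ∈ F, (Finset.univ.filter (fun v => G.fV v = q)).card =
      ∑ q ∈ F, (Finset.univ.filter (fun j => fJ j = q)).card := by
    rw [← hV, ← hJ, hJV]
  have heq := (Finset.sum_eq_sum_iff_of_le hle).1 hsum p
    (Finset.mem_union_right _ (Finset.mem_singleton_self p))
  rw [Nat.card_eq_fintype_card, Nat.card_eq_fintype_card,
    Fintype.card_subtype, Fintype.card_subtype]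
  exact heq.symm
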